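/- Fix a graph G, an integer k ≥ 1, a partial colour function c : S → {1,…,k} with S ⊆ V(G), and a nice tree decomposition (T, 𝒳) of G. Let t be a join node with children t₁ and t₂ (so X_t = X_{t₁} = X_{t₂}). Then for every valid tuple τ = [t, c', ℋ] with ℋ = {(H_i, U_i)}_{i=1}^k, one has Π(t, c', ℋ) = Π(t₁, c', ℋ) + Π(t₂, c', ℋ) − Σ_{i=1}^k |H_i|, with the convention that the right-hand side equals −∞ whenever Π(t₁, c', ℋ) = −∞ or Π(t₂, c', ℋ) = −∞. -/

import Mathlib

open SimpleGraph

/-- A tree decomposition of a graph `G` over a tree `TG`. -/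
structure TreeDecomp {V T : Type*} (G : SimpleGraph V) (TG : SimpleGraph T) where
  isTree : TG.IsTree
  bag : T → Set V
  bags_cover : ∀ v : V, ∃ t : T, v ∈ bag t
  bags_cover_edges : ∀ ⦃u v : V⦄, G.Adj u v → ∃ t : T, u ∈ bag t ∧ v ∈ bag t
  bags_connected : ∀ v : V, (TG.induce {t : T | v ∈ bag t}).Connected

/-- The width of a tree decomposition: the maximum bag size minus one. -/
noncomputable def TreeDecomp.width {V T : Type*} [Fintype T] {G : SimpleGraph V}
    {TG : SimpleGraph T} (D : TreeDecomp G TG) : ℕ :=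
  (Finset.univ.sup fun t : T => (D.bag t).ncard) - 1

/-- In the tree `TG` rooted at `r`, node `t'` is a descendant of `t`
(with `t` counted as its own descendant): every walk from the root `r`
to `t'` passes through `t`. -/
def TreeDesc {T : Type*} (TG : SimpleGraph T) (r t t' : T) : Prop :=
  ∀ p : TG.Walk r t', t ∈ p.support

/-- `t'` is a child of `t` in the tree `TG` rooted at `r`. -/
def TreeChild {T : Type*} (TG : SimpleGraph T) (r t t' : T) : Prop :=
  TG.Adj t t' ∧ TreeDesc TG r t t'

/-- A leaf node of the rooted tree: a node with no children. -/
def TreeLeafNode {T : Type*} (TG : SimpleGraph T) (r t : T) : Prop :=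
  ∀ t', ¬ TreeChild TG r t t'

variable {V T : Type*} {G : SimpleGraph V} {TG : SimpleGraph T}

/-- `V(G_t)`: the vertices of the subgraph `G_t`, namely the union of the
bag of `t` with the bags of all descendants of `t`. -/
def TreeDecomp.VtSet (D : TreeDecomp G TG) (r t : T) : Set V :=
  D.bag t ∪ {v | ∃ t', TreeDesc TG r t t' ∧ v ∈ D.bag t'}

/-- `t` is an introduce node with (unique) child `tc`, introducing `v`. -/
def TreeDecomp.IsIntroduceAt (D : TreeDecomp G TG) (r t tc : T) (v : V) : Prop :=
  TreeChild TG r t tc ∧ (∀ s, TreeChild TG r t s → s = tc) ∧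
    v ∉ D.bag tc ∧ D.bag t = insert v (D.bag tc)

/-- `t` is a forget node with (unique) child `tc`, forgetting `v`. -/
def TreeDecomp.IsForgetAt (D : TreeDecomp G TG) (r t tc : T) (v : V) : Prop :=
  TreeChild TG r t tc ∧ (∀ s, TreeChild TG r t s → s = tc) ∧
    v ∈ D.bag tc ∧ D.bag t = D.bag tc \ {v}

/-- `t` is a join node with (exactly two) children `t₁` and `t₂`,
whose bags coincide with the bag of `t`. -/
def TreeDecomp.IsJoinAt (D : TreeDecomp G TG) (r t t₁ t₂ : T) : Prop :=
  t₁ ≠ t₂ ∧ TreeChild TG r t t₁ ∧ TreeChild TG r t t₂ ∧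
    (∀ s, TreeChild TG r t s → s = t₁ ∨ s = t₂) ∧
    D.bag t = D.bag t₁ ∧ D.bag t = D.bag t₂

/-- A nice tree decomposition rooted at `r`. -/
structure TreeDecomp.IsNice (D : TreeDecomp G TG) (r : T) : Prop where
  root_empty : D.bag r = ∅
  leaf_empty : ∀ t, TreeLeafNode TG r t → D.bag t = ∅
  node_kinds : ∀ t, ¬ TreeLeafNode TG r t →
    (∃ tc v, D.IsIntroduceAt r t tc v) ∨ (∃ tc v, D.IsForgetAt r t tc v) ∨
      (∃ t₁ t₂, D.IsJoinAt r t t₁ t₂)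

/-- A vertex is happy w.r.t. a total colouring if all of its neighbours share its colour. -/
def Happy {k : ℕ} (G : SimpleGraph V) (c : V → Fin k) (v : V) : Prop :=
  ∀ u : V, G.Adj v u → c u = c v

/-- A vertex is happy within the subgraph of `G` induced by `A`
(all of its neighbours inside `A` share its colour). -/
def HappyOn {k : ℕ} (G : SimpleGraph V) (A : Set V) (c : V → Fin k) (v : V) : Prop :=
  ∀ u ∈ A, G.Adj v u → c u = c v

/-- `c'` extends the partial colouring `c` defined on `S`. -/
def ExtendsOn {k : ℕ} (S : Set V) (c c' : V → Fin k) : Prop :=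
  ∀ v ∈ S, c' v = c v

/-- The number of happy vertices of `G` w.r.t. a total colouring. -/
noncomputable def happyCount {k : ℕ} (G : SimpleGraph V) (c : V → Fin k) : ℕ :=
  {v | Happy G c v}.ncard

/-- The treewidth of a (finite) graph: the minimum width of a tree decomposition. -/
noncomputable def treewidth {V : Type*} [Fintype V] (G : SimpleGraph V) : ℕ :=
  sInf {w : ℕ | ∃ (n : ℕ) (TG : SimpleGraph (Fin n)) (D : TreeDecomp G TG), D.width = w}

/-- A dynamic-programming tuple `τ = [t, c', ℋ]`: a node, a colouring (meaningful on
the bag of the node) and a family `ℋ = (H_i, U_i)_i`. -/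
structure MHVTuple (V T : Type*) (k : ℕ) where
  node : T
  col : V → Fin k
  H : Fin k → Set V
  U : Fin k → Set V

/-- A valid tuple: the bag colouring agrees with `c` on `S ∩ X_t`, and `ℋ` is a
partition family with `H_i ∪ U_i = c'⁻¹(i) ∩ X_t` and `H_i ∩ U_i = ∅`. -/
def TreeDecomp.ValidTuple (D : TreeDecomp G TG) {k : ℕ} (S : Set V) (c : V → Fin k)
    (τ : MHVTuple V T k) : Prop :=
  (∀ v ∈ S ∩ D.bag τ.node, τ.col v = c v) ∧
    (∀ i, τ.H i ∪ τ.U i = {v ∈ D.bag τ.node | τ.col v = i}) ∧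
    (∀ i, τ.H i ∩ τ.U i = ∅)

/-- A `τ`-good colouring: it extends the bag colouring `c'` of `τ`, agrees with the
initial partial colouring `c` on `S ∩ V(G_t)`, and makes every vertex of every `H_i`
happy in `G_t`. -/
def TreeDecomp.TauGood (D : TreeDecomp G TG) {k : ℕ} (r : T) (S : Set V) (c : V → Fin k)
    (τ : MHVTuple V T k) (cτ : V → Fin k) : Prop :=
  (∀ v ∈ D.bag τ.node, cτ v = τ.col v) ∧
    (∀ v ∈ S ∩ D.VtSet r τ.node, cτ v = c v) ∧
    (∀ i, ∀ v ∈ τ.H i, HappyOn G (D.VtSet r τ.node) cτ v)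

/-- `Π(τ)`: the maximum over all `τ`-good colourings of the number of vertices of
`V(G_t) \ ⋃ᵢ Uᵢ` that are happy in `G_t`; `−∞ = ⊥` if no `τ`-good colouring exists. -/
noncomputable def TreeDecomp.PiVal (D : TreeDecomp G TG) {k : ℕ} (r : T) (S : Set V)
    (c : V → Fin k) (τ : MHVTuple V T k) : EReal :=
  sSup {x : EReal | ∃ cτ : V → Fin k, D.TauGood r S c τ cτ ∧
    x = (({v ∈ D.VtSet r τ.node | v ∉ (⋃ i, τ.U i) ∧
      HappyOn G (D.VtSet r τ.node) cτ v}.ncard : ℕ) : EReal)}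

section TreeLemmas

open SimpleGraph Walk

variable {r a b t t₁ t₂ : T}

lemma treeDesc_refl (r a : T) : TreeDesc TG r a a := fun p => p.end_mem_support

lemma treeDesc_trans {s : T} (hab : TreeDesc TG r a b) (hbs : TreeDesc TG r b s) :
    TreeDesc TG r a s := by
  classical
  intro p
  have hb : b ∈ p.support := hbs p
  exact p.support_takeUntil_subset hb (hab (p.takeUntil b hb))

lemma path_support_subset_walk (hT : TG.IsAcyclic) {u v : T} {p w : TG.Walk u v}
    (hp : p.IsPath) : p.support ⊆ w.support := by
  classical
  have h1 : (⟨p, hp⟩ : TG.Path u v) = w.toPath := hT.path_unique _ _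
  have h2 : p = (w.toPath : TG.Walk u v) := congrArg Subtype.val h1
  rw [h2]
  exact w.support_toPath_subset

lemma treeDesc_iff (hT : TG.IsAcyclic) {p : TG.Walk r b} (hp : p.IsPath) :
    TreeDesc TG r a b ↔ a ∈ p.support := by
  exact ⟨fun h => h p, fun h w => path_support_subset_walk hT hp h⟩

lemma exists_path (hT : TG.IsTree) (u v : T) : ∃ p : TG.Walk u v, p.IsPath := by
  classical
  obtain ⟨w⟩ := hT.isConnected u v
  exact ⟨w.bypass, w.bypass_isPath⟩

lemma treeDesc_antisymm (hT : TG.IsTree) (hab : TreeDesc TG r a b)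
    (hba : TreeDesc TG r b a) : a = b := by
  classical
  by_contra hne
  obtain ⟨q, hq⟩ := exists_path hT r b
  have ha : a ∈ q.support := hab q
  have hb' : b ∈ (q.takeUntil a ha).support := hba _
  have hnodup : q.support.Nodup := hq.support_nodup
  rw [← q.take_spec ha, Walk.support_append] at hnodup
  have hdisj := List.disjoint_of_nodup_append hnodup
  have hbend : b ∈ (q.dropUntil a ha).support := Walk.end_mem_support _
  have hbtail : b ∈ (q.dropUntil a ha).support.tail := by
    have hcons := Walk.support_eq_cons (q.dropUntil a ha)
    rw [hcons] at hbend
    rcases List.mem_cons.mp hbend with h | h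
    · exact absurd h.symm hne
    · exact h
  exact hdisj hb' hbtail

end TreeLemmas

section TreeLemmas2

open SimpleGraph Walk

variable {r a t t₁ t₂ : T}

/-- Splitting the support of a walk at a vertex it passes through. -/
lemma support_split [DecidableEq T] {b : T} (q : TG.Walk r b) (h : t ∈ q.support) :
    q.support = (q.takeUntil t h).support ++ (q.dropUntil t h).support.tail := by
  conv_lhs => rw [← q.take_spec h]
  rw [Walk.support_append]

/-- For a child `a` of `t` and a path `q : r → a`, the part of `q` after `t`
is exactly the single edge `t−a`. -/
lemma drop_child_support [DecidableEq T] (hT : TG.IsTree) (hadj : TG.Adj t a) {q : TG.Walk r a}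
    (hq : q.IsPath) (ht : t ∈ q.support) :
    (q.dropUntil t ht).support = [t, a] := by
  have hpath : (q.dropUntil t ht).IsPath := hq.dropUntil ht
  have h2 : (Walk.cons hadj Walk.nil : TG.Walk t a).IsPath := by
    simp [hadj.ne]
  have h3 : (⟨q.dropUntil t ht, hpath⟩ : TG.Path t a) = ⟨Walk.cons hadj Walk.nil, h2⟩ :=
    hT.IsAcyclic.path_unique _ _
  have h4 : q.dropUntil t ht = Walk.cons hadj Walk.nil := congrArg Subtype.val h3
  rw [h4]
  simp

/-- If `t₁`, `t₂` are distinct children of `t` and `a` is a descendant of `t₁`,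
then `a` is not a descendant of `t₂`. -/
lemma not_desc_other_child (hT : TG.IsTree)
    (hadj1 : TG.Adj t t₁) (hd1 : TreeDesc TG r t t₁)
    (hadj2 : TG.Adj t t₂) (hd2 : TreeDesc TG r t t₂)
    (hne : t₁ ≠ t₂) (ha1 : TreeDesc TG r t₁ a) : ¬ TreeDesc TG r t₂ a := by
  classical
  intro ha2
  obtain ⟨q, hq⟩ := exists_path hT r t₁
  obtain ⟨Q, hQ⟩ := exists_path hT t₁ a
  have ht2 : t₂ ∈ (q.append Q).support := ha2 _
  rw [Walk.mem_support_append_iff] at ht2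
  -- helper: t₂ cannot lie on a path from r to t₁
  have hnotq : t₂ ∉ q.support := by
    intro hmem
    have htq : t ∈ q.support := hd1 q
    have hsplit : q.support = (q.takeUntil t htq).support ++ [t₁] := by
      rw [support_split q htq, drop_child_support hT hadj1 hq htq]; rfl
    rw [hsplit, List.mem_append] at hmem
    rcases hmem with hmem | hmem
    · have : TreeDesc TG r t₂ t :=
        (treeDesc_iff hT.IsAcyclic (hq.takeUntil htq)).mpr hmem
      have : t = t₂ := treeDesc_antisymm hT hd2 this
      exact hadj2.ne this
    · simp only [List.mem_singleton] at hmem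
      exact hne hmem.symm
  rcases ht2 with ht2 | ht2
  · exact hnotq ht2
  · -- t₂ lies on the path Q from t₁ to a
    obtain ⟨q₂, hq₂⟩ := exists_path hT r t₂
    have ht1 : t₁ ∈ (q₂.append (Q.dropUntil t₂ ht2)).support := ha1 _
    rw [Walk.mem_support_append_iff] at ht1
    rcases ht1 with ht1 | ht1
    · -- t₁ on a path from r to t₂: symmetric contradiction
      have htq : t ∈ q₂.support := hd2 q₂
      have hsplit : q₂.support = (q₂.takeUntil t htq).support ++ [t₂] := by
        rw [support_split q₂ htq, drop_child_support hT hadj2 hq₂ htq]; rfl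
      rw [hsplit, List.mem_append] at ht1
      rcases ht1 with ht1 | ht1
      · have : TreeDesc TG r t₁ t :=
          (treeDesc_iff hT.IsAcyclic (hq₂.takeUntil htq)).mpr ht1
        have : t = t₁ := treeDesc_antisymm hT hd1 this
        exact hadj1.ne this
      · simp only [List.mem_singleton] at ht1
        exact hne ht1
    · -- t₁ appears in the part of Q after t₂: contradicts Nodup of Q.support
      have hnodup : Q.support.Nodup := hQ.support_nodup
      rw [← Q.take_spec ht2, Walk.support_append] at hnodup
      have hdisj := List.disjoint_of_nodup_append hnodup
      have h1take : t₁ ∈ (Q.takeUntil t₂ ht2).support := Walk.start_mem_support _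
      have h1tail : t₁ ∈ (Q.dropUntil t₂ ht2).support.tail := by
        have hcons := Walk.support_eq_cons (Q.dropUntil t₂ ht2)
        rw [hcons] at ht1
        rcases List.mem_cons.mp ht1 with h | h
        · exact absurd h hne
        · exact h
      exact hdisj h1take h1tail

/-- Separator property: any walk from a descendant of `t₁` to a descendant of `t₂`
passes through `t`. -/
lemma separator (hT : TG.IsTree)
    (hadj1 : TG.Adj t t₁) (hd1 : TreeDesc TG r t t₁)
    (hadj2 : TG.Adj t t₂) (hd2 : TreeDesc TG r t t₂)
    (hne : t₁ ≠ t₂) {s s₂ : T} (hs : TreeDesc TG r t₁ s) (hs₂ : TreeDesc TG r t₂ s₂)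
    (w : TG.Walk s s₂) : t ∈ w.support := by
  classical
  by_contra ht
  -- t₂ lies on w
  obtain ⟨q, hq⟩ := exists_path hT r s
  have h2 : t₂ ∈ (q.append w).support := hs₂ _
  rw [Walk.mem_support_append_iff] at h2
  have hnot2 : ¬ TreeDesc TG r t₂ s :=
    not_desc_other_child hT hadj1 hd1 hadj2 hd2 hne hs
  rcases h2 with h2 | h2
  · exact hnot2 ((treeDesc_iff hT.IsAcyclic hq).mpr h2)
  -- t₁ lies on w
  obtain ⟨q₂, hq₂⟩ := exists_path hT r s₂
  have h1 : t₁ ∈ (q₂.append w.reverse).support := hs _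
  rw [Walk.mem_support_append_iff] at h1
  have hnot1 : ¬ TreeDesc TG r t₁ s₂ :=
    not_desc_other_child hT hadj2 hd2 hadj1 hd1 hne.symm hs₂
  rcases h1 with h1 | h1
  · exact hnot1 ((treeDesc_iff hT.IsAcyclic hq₂).mpr h1)
  rw [Walk.support_reverse, List.mem_reverse] at h1
  -- extract a walk from t₁ to t₂ inside w
  have hmid : ∀ w' : TG.Walk t₁ t₂, t ∈ w'.support := by
    intro w'
    have hpath : (Walk.cons hadj1.symm (Walk.cons hadj2 Walk.nil) : TG.Walk t₁ t₂).IsPath := by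
      simp [Walk.isPath_def, hadj1.ne', hadj2.ne, hne]
    have := path_support_subset_walk hT.IsAcyclic (w := w') hpath
    apply this
    simp
  by_cases hc : t₂ ∈ (w.dropUntil t₁ h1).support
  · have hsub : ((w.dropUntil t₁ h1).takeUntil t₂ hc).support ⊆ w.support := by
      intro x hx
      exact w.support_dropUntil_subset h1
        ((w.dropUntil t₁ h1).support_takeUntil_subset hc hx)
    exact ht (hsub (hmid _))
  · have hc' : t₂ ∈ (w.takeUntil t₁ h1).support := by
      have : t₂ ∈ w.support := h2
      rw [← w.take_spec h1, Walk.mem_support_append_iff] at this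
      rcases this with h | h
      · exact h
      · exact absurd h hc
    have hsub : (((w.takeUntil t₁ h1).dropUntil t₂ hc').reverse).support ⊆ w.support := by
      intro x hx
      rw [Walk.support_reverse, List.mem_reverse] at hx
      exact w.support_takeUntil_subset h1
        ((w.takeUntil t₁ h1).support_dropUntil_subset hc' hx)
    exact ht (hsub (hmid _))

/-- One-sided separator: a walk from a non-descendant of `t₁` to a descendant of `t₁`
passes through `t₁`. -/
lemma separator' (hT : TG.IsTree) {s s₁ : T} (hns : ¬ TreeDesc TG r t₁ s)
    (hs₁ : TreeDesc TG r t₁ s₁) (w : TG.Walk s s₁) : t₁ ∈ w.support := by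
  classical
  obtain ⟨q, hq⟩ := exists_path hT r s
  have h1 : t₁ ∈ (q.append w).support := hs₁ _
  rw [Walk.mem_support_append_iff] at h1
  rcases h1 with h1 | h1
  · exact absurd ((treeDesc_iff hT.IsAcyclic hq).mpr h1) hns
  · exact h1

/-- Every proper descendant of `t` is a descendant of some child of `t`. -/
lemma desc_via_child (hT : TG.IsTree) {t' : T} (hd : TreeDesc TG r t t') (hne : t ≠ t') :
    ∃ s, TG.Adj t s ∧ TreeDesc TG r t s ∧ TreeDesc TG r s t' := by
  classical
  obtain ⟨q, hq⟩ := exists_path hT r t'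
  have ht : t ∈ q.support := hd q
  have hdp : (q.dropUntil t ht).IsPath := hq.dropUntil ht
  set d := q.dropUntil t ht with hdef
  cases hdd : d with
  | nil => exact absurd (by rfl) hne
  | @cons _ s _ h d' =>
    refine ⟨s, h, ?_, ?_⟩
    · -- TreeDesc r t s
      intro p
      by_contra htp
      have hgood : t ∈ (p.append d').support := hd _
      rw [Walk.mem_support_append_iff] at hgood
      rcases hgood with hgood | hgood
      · exact htp hgood
      · have : d.support = t :: d'.support := by rw [hdd]; simp
        have hnd : d.support.Nodup := hdp.support_nodup
        rw [this] at hnd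
        exact (List.nodup_cons.mp hnd).1 hgood
    · -- TreeDesc r s t'
      apply (treeDesc_iff hT.IsAcyclic hq).mpr
      apply q.support_dropUntil_subset ht
      rw [← hdef, hdd]
      simp

end TreeLemmas2

section VtSetLemmas

open SimpleGraph Walk

variable {r t t₁ t₂ : T}

/-- Within the (connected) set of bags containing `v`, any two nodes are joined by a
walk all of whose vertices' bags contain `v`. -/
lemma exists_supp_walk (D : TreeDecomp G TG) (v : V) {s s' : T}
    (hs : v ∈ D.bag s) (hs' : v ∈ D.bag s') :
    ∃ w : TG.Walk s s', ∀ x ∈ w.support, v ∈ D.bag x := by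
  have hconn := D.bags_connected v
  obtain ⟨p⟩ := hconn.preconnected ⟨s, hs⟩ ⟨s', hs'⟩
  refine ⟨p.map (SimpleGraph.Embedding.induce {x : T | v ∈ D.bag x}).toHom, ?_⟩
  intro x hx
  replace hx : x ∈ p.support.map (SimpleGraph.Embedding.induce (G := TG) {x : T | v ∈ D.bag x}).toHom := by
    rw [← Walk.support_map]; exact hx
  obtain ⟨y, hy, rfl⟩ := List.mem_map.mp hx
  exact y.2

lemma vtSet_eq (D : TreeDecomp G TG) (r x : T) :
    D.VtSet r x = {v | ∃ s, TreeDesc TG r x s ∧ v ∈ D.bag s} := by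
  ext v
  constructor
  · rintro (h | ⟨s, hs, hv⟩)
    · exact ⟨x, treeDesc_refl r x, h⟩
    · exact ⟨s, hs, hv⟩
  · rintro ⟨s, hs, hv⟩
    exact Or.inr ⟨s, hs, hv⟩

lemma bag_subset_vtSet (D : TreeDecomp G TG) (r x : T) : D.bag x ⊆ D.VtSet r x :=
  fun _ h => Or.inl h

lemma join_vtSet (D : TreeDecomp G TG) (hj : D.IsJoinAt r t t₁ t₂) :
    D.VtSet r t = D.VtSet r t₁ ∪ D.VtSet r t₂ := by
  obtain ⟨hne, ⟨hadj1, hd1⟩, ⟨hadj2, hd2⟩, hcl, hb1, hb2⟩ := hj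
  rw [vtSet_eq, vtSet_eq, vtSet_eq]
  ext v
  simp only [Set.mem_union, Set.mem_setOf_eq]
  constructor
  · rintro ⟨s, hs, hv⟩
    by_cases hst : t = s
    · subst hst
      rw [hb1] at hv
      exact Or.inl ⟨t₁, treeDesc_refl r t₁, hv⟩
    · obtain ⟨ch, hadj, hdch, hdesc⟩ := desc_via_child D.isTree hs hst
      rcases hcl ch ⟨hadj, hdch⟩ with rfl | rfl
      · exact Or.inl ⟨s, hdesc, hv⟩
      · exact Or.inr ⟨s, hdesc, hv⟩
  · rintro (⟨s, hs, hv⟩ | ⟨s, hs, hv⟩)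
    · exact ⟨s, treeDesc_trans hd1 hs, hv⟩
    · exact ⟨s, treeDesc_trans hd2 hs, hv⟩

lemma join_inter_subset (D : TreeDecomp G TG) (hj : D.IsJoinAt r t t₁ t₂) :
    D.VtSet r t₁ ∩ D.VtSet r t₂ ⊆ D.bag t := by
  obtain ⟨hne, ⟨hadj1, hd1⟩, ⟨hadj2, hd2⟩, hcl, hb1, hb2⟩ := hj
  rintro v ⟨h1, h2⟩
  rw [vtSet_eq] at h1 h2
  obtain ⟨s₁, hs₁, hv₁⟩ := h1
  obtain ⟨s₂, hs₂, hv₂⟩ := h2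
  obtain ⟨w, hw⟩ := exists_supp_walk D v hv₁ hv₂
  exact hw t (separator D.isTree hadj1 hd1 hadj2 hd2 hne hs₁ hs₂ w)

lemma join_edge_sep (D : TreeDecomp G TG) (hj : D.IsJoinAt r t t₁ t₂) :
    ∀ u v, G.Adj u v → u ∈ D.VtSet r t₁ → v ∈ D.VtSet r t₂ →
      u ∈ D.bag t ∨ v ∈ D.bag t := by
  obtain ⟨hne, ⟨hadj1, hd1⟩, ⟨hadj2, hd2⟩, hcl, hb1, hb2⟩ := hj
  intro u v hadj hu hv
  rw [vtSet_eq] at hu hv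
  obtain ⟨s₁, hs₁, hu₁⟩ := hu
  obtain ⟨s₂, hs₂, hv₂⟩ := hv
  obtain ⟨s, hus, hvs⟩ := D.bags_cover_edges hadj
  by_cases hds : TreeDesc TG r t₁ s
  · right
    obtain ⟨w, hw⟩ := exists_supp_walk D v hvs hv₂
    exact hw t (separator D.isTree hadj1 hd1 hadj2 hd2 hne hds hs₂ w)
  · left
    rw [hb1]
    obtain ⟨w, hw⟩ := exists_supp_walk D u hus hu₁
    exact hw t₁ (separator' D.isTree hds hs₁ w)

end VtSetLemmas

section CountLemmas

lemma ncard_iUnion_fin {k : ℕ} [Fintype V] (f : Fin k → Set V)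
    (h : ∀ i j, i ≠ j → Disjoint (f i) (f j)) :
    (⋃ i, f i).ncard = ∑ i, (f i).ncard := by
  classical
  have heq : (⋃ i, f i) = ↑(Finset.univ.biUnion fun i => (f i).toFinset) := by
    ext v
    simp
  rw [heq, Set.ncard_coe_finset, Finset.card_biUnion]
  · exact Finset.sum_congr rfl fun i _ => (Set.ncard_eq_toFinset_card' (f i)).symm
  · intro i _ j _ hij
    show Disjoint (f i).toFinset (f j).toFinset
    rw [Finset.disjoint_left]
    intro v hvi hvj
    rw [Set.mem_toFinset] at hvi hvj
    exact Set.disjoint_left.mp (h i j hij) hvi hvj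
end CountLemmas

/-- join node recurrence:
`Π(t, c', ℋ) = Π(t₁, c', ℋ) + Π(t₂, c', ℋ) − Σᵢ |Hᵢ|`, where in `EReal` the
right-hand side is `⊥ = −∞` whenever one of `Π(t₁, c', ℋ)`, `Π(t₂, c', ℋ)` is `⊥`. -/
theorem piVal_join_node {V T : Type*} [Fintype V] [Fintype T]
    (G : SimpleGraph V) (TG : SimpleGraph T) (D : TreeDecomp G TG)
    (k : ℕ) (hk : 1 ≤ k) (S : Set V) (c : V → Fin k)
    (r : T) (hnice : D.IsNice r) (t t₁ t₂ : T) (hj : D.IsJoinAt r t t₁ t₂)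
    (col : V → Fin k) (H U : Fin k → Set V)
    (hvalid : D.ValidTuple S c ⟨t, col, H, U⟩) :
    D.PiVal r S c ⟨t, col, H, U⟩ =
      D.PiVal r S c ⟨t₁, col, H, U⟩ + D.PiVal r S c ⟨t₂, col, H, U⟩
        - ∑ i : Fin k, ((H i).ncard : EReal) := by
  classical
  obtain ⟨hval1, hv2, hv3⟩ : (∀ v ∈ S ∩ D.bag t, col v = c v) ∧
      (∀ i, H i ∪ U i = {v ∈ D.bag t | col v = i}) ∧ (∀ i, H i ∩ U i = ∅) := hvalid
  have hb1 : D.bag t = D.bag t₁ := hj.2.2.2.2.1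
  have hb2 : D.bag t = D.bag t₂ := hj.2.2.2.2.2
  have hAB : D.VtSet r t = D.VtSet r t₁ ∪ D.VtSet r t₂ := join_vtSet D hj
  have hXA : D.bag t ⊆ D.VtSet r t₁ := by
    rw [hb1]; exact bag_subset_vtSet D r t₁
  have hXB : D.bag t ⊆ D.VtSet r t₂ := by
    rw [hb2]; exact bag_subset_vtSet D r t₂
  have hABX : D.VtSet r t₁ ∩ D.VtSet r t₂ ⊆ D.bag t := join_inter_subset D hj
  have hsep := join_edge_sep D hj
  -- facts about the families H and U
  have hHmem : ∀ i, ∀ v ∈ H i, v ∈ D.bag t ∧ col v = i := by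
    intro i v hv
    have h1 : v ∈ H i ∪ U i := Or.inl hv
    rw [hv2 i] at h1
    exact ⟨h1.1, h1.2⟩
  have hUmem : ∀ i, ∀ v ∈ U i, v ∈ D.bag t ∧ col v = i := by
    intro i v hv
    have h1 : v ∈ H i ∪ U i := Or.inr hv
    rw [hv2 i] at h1
    exact ⟨h1.1, h1.2⟩
  have hXnotU : ∀ v ∈ D.bag t, v ∉ (⋃ i, U i) → v ∈ ⋃ i, H i := by
    intro v hvX hvU
    have h1 : v ∈ H (col v) ∪ U (col v) := by
      rw [hv2 (col v)]; exact ⟨hvX, rfl⟩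
    rcases h1 with h1 | h1
    · exact Set.mem_iUnion.mpr ⟨col v, h1⟩
    · exact absurd (Set.mem_iUnion.mpr ⟨col v, h1⟩) hvU
  have hHnotU : ∀ v ∈ ⋃ i, H i, v ∉ ⋃ i, U i := by
    intro v hv hvU
    obtain ⟨i, hi⟩ := Set.mem_iUnion.mp hv
    obtain ⟨j, hjj⟩ := Set.mem_iUnion.mp hvU
    have hij : i = j := by rw [← (hHmem i v hi).2, ← (hUmem j v hjj).2]
    subst hij
    exact Set.eq_empty_iff_forall_notMem.mp (hv3 i) v ⟨hi, hjj⟩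
  have hHHX : (⋃ i, H i) ⊆ D.bag t := by
    intro v hv
    obtain ⟨i, hi⟩ := Set.mem_iUnion.mp hv
    exact (hHmem i v hi).1
  have hHHcard : (⋃ i, H i).ncard = ∑ i, (H i).ncard := by
    refine ncard_iUnion_fin H fun i j hij => Set.disjoint_left.mpr fun v hvi hvj => ?_
    exact hij ((hHmem i v hvi).2.symm.trans (hHmem j v hvj).2)
  -- goodness transfer from the join node to its children
  have hgood_child : ∀ cτ, D.TauGood r S c ⟨t, col, H, U⟩ cτ →
      D.TauGood r S c ⟨t₁, col, H, U⟩ cτ ∧ D.TauGood r S c ⟨t₂, col, H, U⟩ cτ := by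
    intro cτ hg
    obtain ⟨g1, g2, g3⟩ : (∀ v ∈ D.bag t, cτ v = col v) ∧
        (∀ v ∈ S ∩ D.VtSet r t, cτ v = c v) ∧
        (∀ i, ∀ v ∈ H i, HappyOn G (D.VtSet r t) cτ v) := hg
    have hsubA : D.VtSet r t₁ ⊆ D.VtSet r t := by
      rw [hAB]; exact Set.subset_union_left
    have hsubB : D.VtSet r t₂ ⊆ D.VtSet r t := by
      rw [hAB]; exact Set.subset_union_right
    constructor
    · refine ⟨fun v hv => g1 v (by rwa [hb1]), fun v hv => g2 v ⟨hv.1, hsubA hv.2⟩,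
        fun i v hv u hu hadj => g3 i v hv u (hsubA hu) hadj⟩
    · refine ⟨fun v hv => g1 v (by rwa [hb2]), fun v hv => g2 v ⟨hv.1, hsubB hv.2⟩,
        fun i v hv u hu hadj => g3 i v hv u (hsubB hu) hadj⟩
  -- combination of good colourings for the children
  have hcomb : ∀ c₁ c₂, D.TauGood r S c ⟨t₁, col, H, U⟩ c₁ →
      D.TauGood r S c ⟨t₂, col, H, U⟩ c₂ →
      D.TauGood r S c ⟨t, col, H, U⟩ (fun v => if v ∈ D.VtSet r t₁ then c₁ v else c₂ v) := by
    intro c₁ c₂ hg1 hg2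
    obtain ⟨a1, a2, a3⟩ : (∀ v ∈ D.bag t₁, c₁ v = col v) ∧
        (∀ v ∈ S ∩ D.VtSet r t₁, c₁ v = c v) ∧
        (∀ i, ∀ v ∈ H i, HappyOn G (D.VtSet r t₁) c₁ v) := hg1
    obtain ⟨b1, b2, b3⟩ : (∀ v ∈ D.bag t₂, c₂ v = col v) ∧
        (∀ v ∈ S ∩ D.VtSet r t₂, c₂ v = c v) ∧
        (∀ i, ∀ v ∈ H i, HappyOn G (D.VtSet r t₂) c₂ v) := hg2
    refine ⟨?_, ?_, ?_⟩
    · intro v hv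
      show (if v ∈ D.VtSet r t₁ then c₁ v else c₂ v) = col v
      rw [if_pos (hXA hv)]
      exact a1 v (hb1 ▸ hv)
    · intro v hv
      show (if v ∈ D.VtSet r t₁ then c₁ v else c₂ v) = c v
      obtain ⟨hvS, hvV⟩ := hv
      rw [hAB] at hvV
      by_cases hvA : v ∈ D.VtSet r t₁
      · rw [if_pos hvA]; exact a2 v ⟨hvS, hvA⟩
      · rcases hvV with h | h
        · exact absurd h hvA
        · rw [if_neg hvA]; exact b2 v ⟨hvS, h⟩
    · intro i v hv u hu hadj
      have hvX : v ∈ D.bag t := (hHmem i v hv).1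
      have hvA : v ∈ D.VtSet r t₁ := hXA hvX
      have hvval : c₁ v = col v := a1 v (hb1 ▸ hvX)
      have hvval2 : c₂ v = col v := b1 v (hb2 ▸ hvX)
      rw [hAB] at hu
      show (if u ∈ D.VtSet r t₁ then c₁ u else c₂ u) = (if v ∈ D.VtSet r t₁ then c₁ v else c₂ v)
      rw [if_pos hvA]
      by_cases huA : u ∈ D.VtSet r t₁
      · rw [if_pos huA]
        exact (a3 i v hv u huA hadj).trans rfl
      · rcases hu with h | h
        · exact absurd h huA
        · rw [if_neg huA]
          rw [b3 i v hv u h hadj, hvval2, ← hvval]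
  -- local notation for the counted sets
  have hcount1 : ∀ x (hbx : D.bag t = D.bag x) cτ, D.TauGood r S c ⟨x, col, H, U⟩ cτ →
      (D.bag t ⊆ D.VtSet r x) →
      {v ∈ D.VtSet r x | v ∉ (⋃ i, U i) ∧ HappyOn G (D.VtSet r x) cτ v}.ncard
        = {v | (v ∈ D.VtSet r x ∧ v ∉ D.bag t) ∧ v ∉ (⋃ i, U i) ∧
            HappyOn G (D.VtSet r x) cτ v}.ncard + (⋃ i, H i).ncard := by
    intro x hbx cτ hg hXsub
    obtain ⟨g1, g2, g3⟩ : (∀ v ∈ D.bag x, cτ v = col v) ∧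
        (∀ v ∈ S ∩ D.VtSet r x, cτ v = c v) ∧
        (∀ i, ∀ v ∈ H i, HappyOn G (D.VtSet r x) cτ v) := hg
    have hseteq : {v ∈ D.VtSet r x | v ∉ (⋃ i, U i) ∧ HappyOn G (D.VtSet r x) cτ v}
        = {v | (v ∈ D.VtSet r x ∧ v ∉ D.bag t) ∧ v ∉ (⋃ i, U i) ∧
            HappyOn G (D.VtSet r x) cτ v} ∪ ⋃ i, H i := by
      ext v
      constructor
      · rintro ⟨hvA, hvU, hvh⟩
        by_cases hvX : v ∈ D.bag t
        · exact Or.inr (hXnotU v hvX hvU)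
        · exact Or.inl ⟨⟨hvA, hvX⟩, hvU, hvh⟩
      · rintro (⟨⟨hvA, _⟩, h⟩ | hv)
        · exact ⟨hvA, h⟩
        · obtain ⟨i, hi⟩ := Set.mem_iUnion.mp hv
          exact ⟨hXsub (hHHX hv), hHnotU v hv, g3 i v hi⟩
    rw [hseteq, Set.ncard_union_eq]
    exact Set.disjoint_left.mpr fun v hv hv' => hv.1.2 (hHHX hv')
  -- count identity at the join node
  have hcountT : ∀ cτ, D.TauGood r S c ⟨t, col, H, U⟩ cτ →
      {v ∈ D.VtSet r t | v ∉ (⋃ i, U i) ∧ HappyOn G (D.VtSet r t) cτ v}.ncard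
          + (⋃ i, H i).ncard
        = {v ∈ D.VtSet r t₁ | v ∉ (⋃ i, U i) ∧ HappyOn G (D.VtSet r t₁) cτ v}.ncard
          + {v ∈ D.VtSet r t₂ | v ∉ (⋃ i, U i) ∧ HappyOn G (D.VtSet r t₂) cτ v}.ncard := by
    intro cτ hg
    obtain ⟨hg1, hg2⟩ := hgood_child cτ hg
    obtain ⟨g1, g2, g3⟩ : (∀ v ∈ D.bag t, cτ v = col v) ∧
        (∀ v ∈ S ∩ D.VtSet r t, cτ v = c v) ∧
        (∀ i, ∀ v ∈ H i, HappyOn G (D.VtSet r t) cτ v) := hg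
    -- the restriction lemmas: happiness localises
    have hresA : ∀ v, v ∈ D.VtSet r t₁ → v ∉ D.bag t →
        (HappyOn G (D.VtSet r t) cτ v ↔ HappyOn G (D.VtSet r t₁) cτ v) := by
      intro v hvA hvX
      constructor
      · intro h u hu hadj
        exact h u (by rw [hAB]; exact Or.inl hu) hadj
      · intro h u hu hadj
        rw [hAB] at hu
        rcases hu with hu | hu
        · exact h u hu hadj
        · rcases hsep v u hadj hvA hu with h' | h'
          · exact absurd h' hvX
          · exact h u (hXA h') hadj
    have hresB : ∀ v, v ∈ D.VtSet r t₂ → v ∉ D.bag t →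
        (HappyOn G (D.VtSet r t) cτ v ↔ HappyOn G (D.VtSet r t₂) cτ v) := by
      intro v hvB hvX
      constructor
      · intro h u hu hadj
        exact h u (by rw [hAB]; exact Or.inr hu) hadj
      · intro h u hu hadj
        rw [hAB] at hu
        rcases hu with hu | hu
        · rcases hsep u v hadj.symm hu hvB with h' | h'
          · exact h u (hXB h') hadj
          · exact absurd h' hvX
        · exact h u hu hadj
    have hseteqT : {v ∈ D.VtSet r t | v ∉ (⋃ i, U i) ∧ HappyOn G (D.VtSet r t) cτ v}
        = ({v | (v ∈ D.VtSet r t₁ ∧ v ∉ D.bag t) ∧ v ∉ (⋃ i, U i) ∧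
              HappyOn G (D.VtSet r t₁) cτ v}
            ∪ {v | (v ∈ D.VtSet r t₂ ∧ v ∉ D.bag t) ∧ v ∉ (⋃ i, U i) ∧
              HappyOn G (D.VtSet r t₂) cτ v}) ∪ ⋃ i, H i := by
      ext v
      constructor
      · rintro ⟨hvV, hvU, hvh⟩
        by_cases hvX : v ∈ D.bag t
        · exact Or.inr (hXnotU v hvX hvU)
        · rw [hAB] at hvV
          rcases hvV with hvA | hvB
          · exact Or.inl (Or.inl ⟨⟨hvA, hvX⟩, hvU, (hresA v hvA hvX).mp hvh⟩)
          · exact Or.inl (Or.inr ⟨⟨hvB, hvX⟩, hvU, (hresB v hvB hvX).mp hvh⟩)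
      · rintro ((⟨⟨hvA, hvX⟩, hvU, hvh⟩ | ⟨⟨hvB, hvX⟩, hvU, hvh⟩) | hv)
        · exact ⟨by rw [hAB]; exact Or.inl hvA, hvU, (hresA v hvA hvX).mpr hvh⟩
        · exact ⟨by rw [hAB]; exact Or.inr hvB, hvU, (hresB v hvB hvX).mpr hvh⟩
        · obtain ⟨i, hi⟩ := Set.mem_iUnion.mp hv
          exact ⟨hAB ▸ Or.inl (hXA (hHHX hv)), hHnotU v hv, g3 i v hi⟩
    rw [hseteqT, Set.ncard_union_eq, Set.ncard_union_eq]
    · rw [hcount1 t₁ hb1 cτ hg1 hXA, hcount1 t₂ hb2 cτ hg2 hXB]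
      ring
    · exact Set.disjoint_left.mpr fun v hv hv' =>
        hv.1.2 (hABX ⟨hv.1.1, hv'.1.1⟩)
    · refine Set.disjoint_left.mpr fun v hv hv' => ?_
      rcases hv with hv | hv
      · exact hv.1.2 (hHHX hv')
      · exact hv.1.2 (hHHX hv')
  -- counts only depend on the restriction of the colouring
  have hcongr : ∀ (W : Set V) (c₁ c₂ : V → Fin k), (∀ v ∈ W, c₁ v = c₂ v) →
      {v ∈ W | v ∉ (⋃ i, U i) ∧ HappyOn G W c₁ v}
        = {v ∈ W | v ∉ (⋃ i, U i) ∧ HappyOn G W c₂ v} := by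
    intro W c₁ c₂ hcc
    ext v
    have : v ∈ W → (HappyOn G W c₁ v ↔ HappyOn G W c₂ v) := by
      intro hvW
      constructor
      · intro h u hu hadj
        rw [← hcc u hu, ← hcc v hvW]
        exact h u hu hadj
      · intro h u hu hadj
        rw [hcc u hu, hcc v hvW]
        exact h u hu hadj
    constructor
    · rintro ⟨h1, h2, h3⟩
      exact ⟨h1, h2, (this h1).mp h3⟩
    · rintro ⟨h1, h2, h3⟩
      exact ⟨h1, h2, (this h1).mpr h3⟩
  -- unfold PiVal
  have hPi : ∀ x : T, D.PiVal r S c ⟨x, col, H, U⟩ =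
      sSup {y : EReal | ∃ cτ : V → Fin k, D.TauGood r S c ⟨x, col, H, U⟩ cτ ∧
        y = (({v ∈ D.VtSet r x | v ∉ (⋃ i, U i) ∧
          HappyOn G (D.VtSet r x) cτ v}.ncard : ℕ) : EReal)} := fun _ => rfl
  rw [hPi t, hPi t₁, hPi t₂]
  have hfin : ∀ x : T, {y : EReal | ∃ cτ : V → Fin k, D.TauGood r S c ⟨x, col, H, U⟩ cτ ∧
      y = (({v ∈ D.VtSet r x | v ∉ (⋃ i, U i) ∧
        HappyOn G (D.VtSet r x) cτ v}.ncard : ℕ) : EReal)}.Finite := by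
    intro x
    apply Set.Finite.subset (Set.finite_range fun cτ : V → Fin k =>
      (({v ∈ D.VtSet r x | v ∉ (⋃ i, U i) ∧
        HappyOn G (D.VtSet r x) cτ v}.ncard : ℕ) : EReal))
    rintro y ⟨cτ, _, rfl⟩
    exact ⟨cτ, rfl⟩
  by_cases hex : ∃ cτ, D.TauGood r S c ⟨t, col, H, U⟩ cτ
  · -- the interesting case
    obtain ⟨cT0, hcT0⟩ := hex
    have hSTne : {y : EReal | ∃ cτ : V → Fin k, D.TauGood r S c ⟨t, col, H, U⟩ cτ ∧
        y = (({v ∈ D.VtSet r t | v ∉ (⋃ i, U i) ∧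
          HappyOn G (D.VtSet r t) cτ v}.ncard : ℕ) : EReal)}.Nonempty := ⟨_, cT0, hcT0, rfl⟩
    have hS1ne : {y : EReal | ∃ cτ : V → Fin k, D.TauGood r S c ⟨t₁, col, H, U⟩ cτ ∧
        y = (({v ∈ D.VtSet r t₁ | v ∉ (⋃ i, U i) ∧
          HappyOn G (D.VtSet r t₁) cτ v}.ncard : ℕ) : EReal)}.Nonempty :=
      ⟨_, cT0, (hgood_child cT0 hcT0).1, rfl⟩
    have hS2ne : {y : EReal | ∃ cτ : V → Fin k, D.TauGood r S c ⟨t₂, col, H, U⟩ cτ ∧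
        y = (({v ∈ D.VtSet r t₂ | v ∉ (⋃ i, U i) ∧
          HappyOn G (D.VtSet r t₂) cτ v}.ncard : ℕ) : EReal)}.Nonempty :=
      ⟨_, cT0, (hgood_child cT0 hcT0).2, rfl⟩
    obtain ⟨cT, hcT, hmT⟩ := hSTne.csSup_mem (hfin t)
    obtain ⟨c1, hc1, hm1⟩ := hS1ne.csSup_mem (hfin t₁)
    obtain ⟨c2, hc2, hm2⟩ := hS2ne.csSup_mem (hfin t₂)
    rw [hmT, hm1, hm2]
    -- natural number abbreviations
    set nT := {v ∈ D.VtSet r t | v ∉ (⋃ i, U i) ∧ HappyOn G (D.VtSet r t) cT v}.ncard with hnT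
    set n1 := {v ∈ D.VtSet r t₁ | v ∉ (⋃ i, U i) ∧ HappyOn G (D.VtSet r t₁) c1 v}.ncard with hn1
    set n2 := {v ∈ D.VtSet r t₂ | v ∉ (⋃ i, U i) ∧ HappyOn G (D.VtSet r t₂) c2 v}.ncard with hn2
    set hh := (⋃ i, H i).ncard with hhh
    -- inequality 1 : nT + hh ≤ n1 + n2
    have hkey1 : nT + hh ≤ n1 + n2 := by
      rw [hcountT cT hcT]
      have hle1 : {v ∈ D.VtSet r t₁ | v ∉ (⋃ i, U i) ∧
          HappyOn G (D.VtSet r t₁) cT v}.ncard ≤ n1 := by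
        have hmem : (({v ∈ D.VtSet r t₁ | v ∉ (⋃ i, U i) ∧
            HappyOn G (D.VtSet r t₁) cT v}.ncard : ℕ) : EReal) ∈
            {y : EReal | ∃ cτ : V → Fin k, D.TauGood r S c ⟨t₁, col, H, U⟩ cτ ∧
              y = (({v ∈ D.VtSet r t₁ | v ∉ (⋃ i, U i) ∧
                HappyOn G (D.VtSet r t₁) cτ v}.ncard : ℕ) : EReal)} :=
          ⟨cT, (hgood_child cT hcT).1, rfl⟩
        have := le_sSup hmem
        rw [hm1] at this
        exact_mod_cast this
      have hle2 : {v ∈ D.VtSet r t₂ | v ∉ (⋃ i, U i) ∧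
          HappyOn G (D.VtSet r t₂) cT v}.ncard ≤ n2 := by
        have hmem : (({v ∈ D.VtSet r t₂ | v ∉ (⋃ i, U i) ∧
            HappyOn G (D.VtSet r t₂) cT v}.ncard : ℕ) : EReal) ∈
            {y : EReal | ∃ cτ : V → Fin k, D.TauGood r S c ⟨t₂, col, H, U⟩ cτ ∧
              y = (({v ∈ D.VtSet r t₂ | v ∉ (⋃ i, U i) ∧
                HappyOn G (D.VtSet r t₂) cτ v}.ncard : ℕ) : EReal)} :=
          ⟨cT, (hgood_child cT hcT).2, rfl⟩
        have := le_sSup hmem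
        rw [hm2] at this
        exact_mod_cast this
      omega
    -- inequality 2 : n1 + n2 ≤ nT + hh, via the combined colouring
    have hkey2 : n1 + n2 ≤ nT + hh := by
      set cC : V → Fin k := fun v => if v ∈ D.VtSet r t₁ then c1 v else c2 v with hcC
      have hgC : D.TauGood r S c ⟨t, col, H, U⟩ cC := hcomb c1 c2 hc1 hc2
      have hC1 : {v ∈ D.VtSet r t₁ | v ∉ (⋃ i, U i) ∧
          HappyOn G (D.VtSet r t₁) cC v}.ncard = n1 := by
        rw [hcongr (D.VtSet r t₁) cC c1 fun v hv => by rw [hcC]; simp [hv]]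
      have hC2 : {v ∈ D.VtSet r t₂ | v ∉ (⋃ i, U i) ∧
          HappyOn G (D.VtSet r t₂) cC v}.ncard = n2 := by
        rw [hcongr (D.VtSet r t₂) cC c2 fun v hv => ?_]
        rw [hcC]
        by_cases hvA : v ∈ D.VtSet r t₁
        · simp only [if_pos hvA]
          have hvX : v ∈ D.bag t := hABX ⟨hvA, hv⟩
          obtain ⟨a1, _, _⟩ : (∀ v ∈ D.bag t₁, c1 v = col v) ∧
              (∀ v ∈ S ∩ D.VtSet r t₁, c1 v = c v) ∧
              (∀ i, ∀ v ∈ H i, HappyOn G (D.VtSet r t₁) c1 v) := hc1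
          obtain ⟨b1, _, _⟩ : (∀ v ∈ D.bag t₂, c2 v = col v) ∧
              (∀ v ∈ S ∩ D.VtSet r t₂, c2 v = c v) ∧
              (∀ i, ∀ v ∈ H i, HappyOn G (D.VtSet r t₂) c2 v) := hc2
          rw [a1 v (hb1 ▸ hvX), b1 v (hb2 ▸ hvX)]
        · simp only [if_neg hvA]
      have hle : {v ∈ D.VtSet r t | v ∉ (⋃ i, U i) ∧
          HappyOn G (D.VtSet r t) cC v}.ncard ≤ nT := by
        have hmem : (({v ∈ D.VtSet r t | v ∉ (⋃ i, U i) ∧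
            HappyOn G (D.VtSet r t) cC v}.ncard : ℕ) : EReal) ∈
            {y : EReal | ∃ cτ : V → Fin k, D.TauGood r S c ⟨t, col, H, U⟩ cτ ∧
              y = (({v ∈ D.VtSet r t | v ∉ (⋃ i, U i) ∧
                HappyOn G (D.VtSet r t) cτ v}.ncard : ℕ) : EReal)} := ⟨cC, hgC, rfl⟩
        have := le_sSup hmem
        rw [hmT] at this
        exact_mod_cast this
      have := hcountT cC hgC
      rw [hC1, hC2] at this
      omega
    have hkey : nT + hh = n1 + n2 := le_antisymm hkey1 hkey2
    -- finish in EReal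
    have hsum : (∑ i : Fin k, ((H i).ncard : EReal)) = ((hh : ℝ) : EReal) := by
      rw [hHHcard, EReal.coe_coe_eq_natCast]
      exact (Nat.cast_sum Finset.univ fun i => (H i).ncard).symm
    rw [hsum, ← EReal.coe_coe_eq_natCast nT, ← EReal.coe_coe_eq_natCast n1,
      ← EReal.coe_coe_eq_natCast n2, ← EReal.coe_add, ← EReal.coe_sub,
      EReal.coe_eq_coe_iff]
    have : (nT : ℝ) + hh = n1 + n2 := by exact_mod_cast hkey
    linarith
  · -- no τ-good colouring at the join node: one of the children has none either
    have hST : {y : EReal | ∃ cτ : V → Fin k, D.TauGood r S c ⟨t, col, H, U⟩ cτ ∧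
        y = (({v ∈ D.VtSet r t | v ∉ (⋃ i, U i) ∧
          HappyOn G (D.VtSet r t) cτ v}.ncard : ℕ) : EReal)} = ∅ := by
      rw [Set.eq_empty_iff_forall_notMem]
      rintro y ⟨cτ, hcτ, _⟩
      exact hex ⟨cτ, hcτ⟩
    rw [hST, sSup_empty]
    by_cases hex1 : ∃ cτ, D.TauGood r S c ⟨t₁, col, H, U⟩ cτ
    · -- then t₂ has no good colouring
      obtain ⟨c1, hc1⟩ := hex1
      have hS2 : {y : EReal | ∃ cτ : V → Fin k, D.TauGood r S c ⟨t₂, col, H, U⟩ cτ ∧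
          y = (({v ∈ D.VtSet r t₂ | v ∉ (⋃ i, U i) ∧
            HappyOn G (D.VtSet r t₂) cτ v}.ncard : ℕ) : EReal)} = ∅ := by
        rw [Set.eq_empty_iff_forall_notMem]
        rintro y ⟨c2, hc2, _⟩
        exact hex ⟨_, hcomb c1 c2 hc1 hc2⟩
      rw [hS2, sSup_empty, EReal.add_bot, EReal.bot_sub]
    · have hS1 : {y : EReal | ∃ cτ : V → Fin k, D.TauGood r S c ⟨t₁, col, H, U⟩ cτ ∧
          y = (({v ∈ D.VtSet r t₁ | v ∉ (⋃ i, U i) ∧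
            HappyOn G (D.VtSet r t₁) cτ v}.ncard : ℕ) : EReal)} = ∅ := by
        rw [Set.eq_empty_iff_forall_notMem]
        rintro y ⟨c1, hc1, _⟩
        exact hex1 ⟨c1, hc1⟩
      rw [hS1, sSup_empty, EReal.bot_add, EReal.bot_sub]
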